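/- Star-shapedness of spherical slices (Corollary 5.6, first part): Let n ≥ 2 and let Ω ⊆ ℝⁿ be an open bounded convex set with 0 ∈ closure(Ω), satisfying the cap hypothesis with unit vector e and radius r* ∈ (0, π/2). Then there exists a constant c > 0, depending only on n and r*, such that for every t ∈ S_c and every s ∈ [t/2, 2t] ∩ (0,1), the slice V_s is star-shaped on the sphere with respect to e: for every p ∈ V_s and all a, b ≥ 0 with a·e + b·p ≠ 0, the point (a·e + b·p)/‖a·e + b·p‖ belongs to V_s. -/

import Mathlib

open Set
open scoped RealInnerProductSpace

noncomputable section

/-- A unit vector `ν` is an outer supporting normal of `Ω` at `y` if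
`⟨ν, z − y⟩ ≤ 0` for all `z ∈ Ω`. -/
def IsOuterNormal {E : Type*} [NormedAddCommGroup E] [InnerProductSpace ℝ E]
    (Ω : Set E) (y ν : E) : Prop :=
  ‖ν‖ = 1 ∧ ∀ z ∈ Ω, ⟪ν, z - y⟫ ≤ 0

/-- `M_x(t) = sup {⟨ν, y − x⟩ : y ∈ ∂Ω, 0 < ‖y − x‖ ≤ t, ν an outer supporting normal at y}`
(`sSup ∅ = 0` in `ℝ`, so the empty case gives `0`). -/
noncomputable def Mfun {E : Type*} [NormedAddCommGroup E] [InnerProductSpace ℝ E]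
    (Ω : Set E) (x : E) (t : ℝ) : ℝ :=
  sSup {m : ℝ | ∃ y ν : E, y ∈ frontier Ω ∧ 0 < ‖y - x‖ ∧ ‖y - x‖ ≤ t ∧
    IsOuterNormal Ω y ν ∧ m = ⟪ν, y - x⟫}

/-- The rescaled spherical slice `V_t = {ω ∈ 𝕊^{n−1} : t·ω ∈ Ω}`. -/
def Vslice {E : Type*} [NormedAddCommGroup E] [InnerProductSpace ℝ E]
    (Ω : Set E) (t : ℝ) : Set E :=
  {ω | ‖ω‖ = 1 ∧ t • ω ∈ Ω}

/-- `S_c = {t ∈ (0,1) : M₀(s) ≤ c·s for all s ∈ [t/4, 4t]}`. -/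
def Sset {E : Type*} [NormedAddCommGroup E] [InnerProductSpace ℝ E]
    (Ω : Set E) (c : ℝ) : Set ℝ :=
  {t | t ∈ Ioo (0:ℝ) 1 ∧ ∀ s ∈ Icc (t/4) (4*t), Mfun Ω 0 s ≤ c * s}

/-- Cap hypothesis: the slice `V₁` contains the geodesic cap of radius `rstar` around
the unit vector `e`. -/
def CapHyp {E : Type*} [NormedAddCommGroup E] [InnerProductSpace ℝ E]
    (Ω : Set E) (e : E) (rstar : ℝ) : Prop :=
  ‖e‖ = 1 ∧ ∀ ω : E, ‖ω‖ = 1 → Real.cos rstar < ⟪ω, e⟫ → ω ∈ Vslice Ω 1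


section AuxLemmas


variable {E : Type*} [NormedAddCommGroup E] [InnerProductSpace ℝ E]

lemma myNormInvSmul {x : E} (hx : x ≠ 0) : ‖‖x‖⁻¹ • x‖ = 1 := by
  rw [norm_smul, norm_inv, norm_norm, inv_mul_cancel₀ (norm_ne_zero_iff.mpr hx)]

lemma myConeMem {Ω : Set E} (hΩo : IsOpen Ω) (hΩc : Convex ℝ Ω)
    (h0 : (0:E) ∈ closure Ω) {ω : E} (hω : ω ∈ Ω) {l : ℝ} (hl0 : 0 < l) (hl1 : l ≤ 1) :
    l • ω ∈ Ω := by
  have h := hΩc.combo_interior_closure_mem_interior (x := ω) (y := 0) (a := l) (b := 1 - l)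
    (by rwa [hΩo.interior_eq]) h0 hl0 (by linarith) (by ring)
  rw [hΩo.interior_eq] at h
  simpa using h

lemma myExistsNormal [CompleteSpace E] {Ω : Set E} (hΩo : IsOpen Ω) (hΩc : Convex ℝ Ω)
    (hne : Ω.Nonempty) {w : E} (hw : w ∉ Ω) :
    ∃ ν : E, ‖ν‖ = 1 ∧ ∀ z ∈ Ω, ⟪ν, z - w⟫ < 0 := by
  obtain ⟨f, hf⟩ := geometric_hahn_banach_open_point hΩc hΩo hw
  set v := (InnerProductSpace.toDual ℝ E).symm f with hv
  have hvx : ∀ x, ⟪v, x⟫ = f x := fun x => InnerProductSpace.toDual_symm_apply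
  have hvne : v ≠ 0 := by
    obtain ⟨z, hz⟩ := hne
    intro h
    have h1 := hf z hz
    rw [← hvx z, ← hvx w, h] at h1
    simp at h1
  refine ⟨‖v‖⁻¹ • v, myNormInvSmul hvne, ?_⟩
  intro z hz
  have h1 : ⟪v, z - w⟫ < 0 := by
    rw [inner_sub_right, hvx, hvx]
    linarith [hf z hz]
  rw [real_inner_smul_left]
  exact mul_neg_of_pos_of_neg (inv_pos.mpr (norm_pos_iff.mpr hvne)) h1

set_option maxHeartbeats 1000000 in
lemma myInnerENeg {e ν : E} (he : ‖e‖ = 1) (hν : ‖ν‖ = 1) {r : ℝ}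
    (hr0 : 0 < r) (hr2 : r < Real.pi / 2)
    (h : ∀ ω : E, ‖ω‖ = 1 → Real.cos r < ⟪ω, e⟫ → ⟪ν, ω⟫ ≤ Real.sin (r/2) / 8) :
    ⟪ν, e⟫ ≤ -(Real.sin (r/2) / 4) := by
  have hpi := Real.pi_pos
  have hS : 0 < Real.sin (r/2) := Real.sin_pos_of_pos_of_lt_pi (by linarith) (by linarith)
  have hC : 0 < Real.cos (r/2) := Real.cos_pos_of_mem_Ioo ⟨by linarith, by linarith⟩
  have hC1 : Real.cos (r/2) ≤ 1 := Real.cos_le_one _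
  have hS1 : Real.sin (r/2) ≤ 1 := Real.sin_le_one _
  have hCS : Real.sin (r/2)^2 + Real.cos (r/2)^2 = 1 := Real.sin_sq_add_cos_sq _
  have hcosr : Real.cos r < Real.cos (r/2) :=
    Real.cos_lt_cos_of_nonneg_of_le_pi (by linarith) (by linarith) (by linarith)
  obtain ⟨S, hSdef⟩ : ∃ S, Real.sin (r/2) = S := ⟨_, rfl⟩
  obtain ⟨C, hCdef⟩ : ∃ C, Real.cos (r/2) = C := ⟨_, rfl⟩
  rw [hSdef] at hS hS1 hCS h ⊢
  rw [hCdef] at hC hC1 hCS hcosr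
  have hee : ⟪e, e⟫ = (1:ℝ) := by rw [real_inner_self_eq_norm_sq, he]; norm_num
  have hνν : ⟪ν, ν⟫ = (1:ℝ) := by rw [real_inner_self_eq_norm_sq, hν]; norm_num
  obtain ⟨μ, hμ⟩ : ∃ μ, ⟪ν, e⟫ = μ := ⟨_, rfl⟩
  have heν : ⟪e, ν⟫ = μ := by rw [real_inner_comm]; exact hμ
  rw [hμ]
  have hμc : μ ≤ S / 8 := by rw [← hμ]; exact h e he (by rw [hee]; linarith)
  by_cases hν0 : ν - μ • e = 0
  · have hνe : ν = μ • e := sub_eq_zero.mp hν0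
    have habs : |μ| = 1 := by
      have h1 := congrArg norm hνe
      rw [hν, norm_smul, Real.norm_eq_abs, he, mul_one] at h1
      exact h1.symm
    rcases (abs_eq (zero_le_one)).mp habs with h1 | h1 <;> linarith
  · have hρpos0 : 0 < ‖ν - μ • e‖ := norm_pos_iff.mpr hν0
    obtain ⟨ρ, hρ⟩ : ∃ ρ, ‖ν - μ • e‖ = ρ := ⟨_, rfl⟩
    rw [hρ] at hρpos0
    have hνpe : ⟪ν - μ • e, e⟫ = 0 := by
      rw [inner_sub_left, real_inner_smul_left, hee, hμ]; ring
    have heνp : ⟪e, ν - μ • e⟫ = 0 := by rw [real_inner_comm]; exact hνpe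
    have hννp : ⟪ν, ν - μ • e⟫ = 1 - μ^2 := by
      rw [inner_sub_right, real_inner_smul_right, hνν, hμ]; ring
    have hpp : ⟪ν - μ • e, ν - μ • e⟫ = ρ^2 := by
      rw [real_inner_self_eq_norm_sq, hρ]
    have hdecomp : μ^2 + ρ^2 = 1 := by
      have h3 : ⟪ν - μ • e, ν - μ • e⟫ = 1 - μ^2 := by
        rw [inner_sub_left, hννp, real_inner_smul_left, heνp]; ring
      rw [h3] at hpp; linarith
    have hρne : ρ ≠ 0 := ne_of_gt hρpos0
    -- the test direction u = ρ⁻¹ • (ν - μ • e)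
    have hue : ⟪ρ⁻¹ • (ν - μ • e), e⟫ = 0 := by
      rw [real_inner_smul_left, hνpe, mul_zero]
    have heu : ⟪e, ρ⁻¹ • (ν - μ • e)⟫ = 0 := by
      rw [real_inner_smul_right, heνp, mul_zero]
    have huu : ⟪ρ⁻¹ • (ν - μ • e), ρ⁻¹ • (ν - μ • e)⟫ = 1 := by
      rw [real_inner_smul_left, real_inner_smul_right, hpp]
      field_simp
    have hνu : ⟪ν, ρ⁻¹ • (ν - μ • e)⟫ = ρ := by
      rw [real_inner_smul_right, hννp]
      have h4 : 1 - μ^2 = ρ^2 := by linarith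
      rw [h4]
      field_simp
    have hωω : ⟪C • e + S • (ρ⁻¹ • (ν - μ • e)), C • e + S • (ρ⁻¹ • (ν - μ • e))⟫ = (1:ℝ) := by
      simp only [inner_add_left, inner_add_right, real_inner_smul_left, real_inner_smul_right,
        hee, heu, hue, huu, hνpe, heνp, hpp]
      field_simp
      linear_combination ρ * hCS
    have hω1 : ‖C • e + S • (ρ⁻¹ • (ν - μ • e))‖ = 1 := by
      have h4 : ‖C • e + S • (ρ⁻¹ • (ν - μ • e))‖^2 = 1 := by
        rw [← real_inner_self_eq_norm_sq]; exact hωω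
      have h5 : (‖C • e + S • (ρ⁻¹ • (ν - μ • e))‖ - 1) *
          (‖C • e + S • (ρ⁻¹ • (ν - μ • e))‖ + 1) = 0 := by linear_combination h4
      rcases mul_eq_zero.mp h5 with h6 | h6
      · linarith
      · linarith [norm_nonneg (C • e + S • (ρ⁻¹ • (ν - μ • e)))]
    have hcapω : Real.cos r < ⟪C • e + S • (ρ⁻¹ • (ν - μ • e)), e⟫ := by
      rw [inner_add_left, real_inner_smul_left, real_inner_smul_left, hee, hue]
      rw [mul_one, mul_zero, add_zero]
      exact hcosr
    have hkey := h _ hω1 hcapω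
    have h7 : ⟪ν, C • e + S • (ρ⁻¹ • (ν - μ • e))⟫ = C * μ + S * ρ := by
      rw [inner_add_right, real_inner_smul_right, real_inner_smul_right, hμ, hνu]
    rw [h7] at hkey
    by_contra hcon
    push_neg at hcon
    clear h hν0 hνpe heνp hννp hpp hue heu huu hνu hωω hω1 hcapω h7 hμ heν hρ hee hνν hcosr hSdef hCdef
    have p1 : (1 - C) * S ≥ 0 := mul_nonneg (by linarith) (by linarith)
    have q := mul_lt_mul_of_pos_left (show -(S/4) < μ by linarith) hC
    have p2 : C * μ > -(S/4) := by nlinarith [q, p1]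
    have p3 : S * ρ < S * (3/8) := by
      have : S * ρ ≤ S/8 - C * μ := by linarith
      linarith
    have p4 : ρ < 3/8 := lt_of_mul_lt_mul_left p3 hS.le
    have p5 : ρ^2 < 9/64 := by nlinarith [p4, hρpos0]
    have p6 : μ^2 > 55/64 := by linarith
    have p7 : μ^2 < 1/16 := by
      nlinarith [mul_pos (show (0:ℝ) < S/4 - μ by linarith) (show (0:ℝ) < S/4 + μ by linarith),
        mul_nonneg (show (0:ℝ) ≤ 1 - S by linarith) (show (0:ℝ) ≤ 1 + S by linarith)]
    linarith

end AuxLemmas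

set_option maxHeartbeats 2000000 in
/-- Star-shapedness of spherical slices (Corollary 5.6, first part). -/
theorem star_shaped_spherical_slices {n : ℕ} (hn : 2 ≤ n)
    (rstar : ℝ) (hr : rstar ∈ Ioo 0 (Real.pi / 2)) :
    ∃ c : ℝ, 0 < c ∧
      ∀ (Ω : Set (EuclideanSpace ℝ (Fin n))) (e : EuclideanSpace ℝ (Fin n)),
        IsOpen Ω → Bornology.IsBounded Ω → Convex ℝ Ω →
        (0 : EuclideanSpace ℝ (Fin n)) ∈ closure Ω →
        CapHyp Ω e rstar →
        ∀ t ∈ Sset Ω c, ∀ s : ℝ, s ∈ Icc (t / 2) (2 * t) → s ∈ Ioo (0:ℝ) 1 →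
          ∀ p ∈ Vslice Ω s, ∀ a b : ℝ, 0 ≤ a → 0 ≤ b → a • e + b • p ≠ 0 →
            ‖a • e + b • p‖⁻¹ • (a • e + b • p) ∈ Vslice Ω s := by
  obtain ⟨hr0, hr2⟩ := hr
  have hpi := Real.pi_pos
  have hS : 0 < Real.sin (rstar/2) :=
    Real.sin_pos_of_pos_of_lt_pi (by linarith) (by linarith)
  have hS1 : Real.sin (rstar/2) ≤ 1 := Real.sin_le_one _
  refine ⟨Real.sin (rstar/2) / 8, by linarith, ?_⟩
  intro Ω e hΩo hΩb hΩc h0 hcap t ht s hs hs01 p hp a b ha hb hab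
  obtain ⟨he1, hcap2⟩ := hcap
  obtain ⟨hp1, hpΩ⟩ := hp
  obtain ⟨hs0, hs1⟩ := hs01
  have hcos1 : Real.cos rstar < 1 := by
    have := Real.cos_lt_cos_of_nonneg_of_le_pi (le_refl 0) (by linarith) hr0
    rwa [Real.cos_zero] at this
  have hee : ⟪e, e⟫ = (1:ℝ) := by rw [real_inner_self_eq_norm_sq, he1]; norm_num
  have heΩ : e ∈ Ω := by
    have h1 := (hcap2 e he1 (by rw [hee]; exact hcos1)).2
    rwa [one_smul] at h1
  have hene : e ≠ 0 := by
    intro h; rw [h, norm_zero] at he1; norm_num at he1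
  have hcapΩ : ∀ ω : EuclideanSpace ℝ (Fin n), ‖ω‖ = 1 → Real.cos rstar < ⟪ω, e⟫ → ω ∈ Ω := by
    intro ω h1 h2
    have h3 := (hcap2 ω h1 h2).2
    rwa [one_smul] at h3
  have hN : 0 < ‖a • e + b • p‖ := norm_pos_iff.mpr hab
  refine ⟨myNormInvSmul hab, ?_⟩
  -- main goal : s • (‖a•e+b•p‖⁻¹ • (a•e+b•p)) ∈ Ω
  -- trivial special cases
  have hseΩ : s • e ∈ Ω := myConeMem hΩo hΩc h0 heΩ hs0 hs1.le
  rcases eq_or_lt_of_le ha with ha0 | ha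
  · -- a = 0 : the point is p itself
    have hb0 : 0 < b := by
      rcases eq_or_lt_of_le hb with hb0 | hb0
      · exfalso; apply hab; rw [← ha0, ← hb0]; simp
      · exact hb0
    have hqp : ‖a • e + b • p‖⁻¹ • (a • e + b • p) = p := by
      rw [← ha0]
      rw [zero_smul, zero_add, norm_smul, Real.norm_eq_abs, abs_of_pos hb0, hp1, mul_one,
        smul_smul, inv_mul_cancel₀ (ne_of_gt hb0), one_smul]
    rw [hqp]; exact hpΩ
  by_cases hpe : p = e
  · have hq : ‖a • e + b • p‖⁻¹ • (a • e + b • p) = e := by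
      rw [hpe]
      have h1 : a • e + b • e = (a + b) • e := by module
      rw [h1, norm_smul, Real.norm_eq_abs, abs_of_pos (by linarith), he1, mul_one,
        smul_smul, inv_mul_cancel₀ (by positivity : (a + b) ≠ 0), one_smul]
    rw [hq]; exact hseΩ
  by_cases hpne : p = -e
  · have hve : a • e + b • p = (a - b) • e := by rw [hpne]; module
    rcases lt_trichotomy a b with h1 | h1 | h1
    · have hq : ‖a • e + b • p‖⁻¹ • (a • e + b • p) = p := by
        have h2 : a - b ≠ 0 := by linarith
        rw [hve, norm_smul, Real.norm_eq_abs, abs_of_neg (by linarith : a - b < 0), he1,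
          mul_one, smul_smul, hpne]
        rw [show (-(a-b))⁻¹ * (a-b) = -1 by
          have h3 : b - a ≠ 0 := by linarith
          field_simp]
        module
      rw [hq]; exact hpΩ
    · exfalso; apply hab; rw [hve, h1]; simp
    · have hq : ‖a • e + b • p‖⁻¹ • (a • e + b • p) = e := by
        rw [hve, norm_smul, Real.norm_eq_abs, abs_of_pos (by linarith), he1, mul_one,
          smul_smul, inv_mul_cancel₀ (by linarith : a - b ≠ 0), one_smul]
      rw [hq]; exact hseΩ
  -- main case: a > 0, e and p independent
  have hind : ∀ x y : ℝ, x • e + y • p = 0 → x = 0 ∧ y = 0 := by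
    intro x y hxy
    by_cases hy : y = 0
    · rw [hy, zero_smul, add_zero, smul_eq_zero] at hxy
      exact ⟨hxy.resolve_right hene, hy⟩
    · exfalso
      have hpxy : p = (-(x/y)) • e := by
        have h1 : y • p = -(x • e) := eq_neg_of_add_eq_zero_right hxy
        have h2 : y • ((-(x/y)) • e) = y • p := by
          rw [h1, smul_smul]
          have h3 : y * -(x/y) = -x := by field_simp
          rw [h3]
          module
        exact (smul_right_injective _ hy h2).symm
      have habs : |x/y| = 1 := by
        have h1 := congrArg norm hpxy
        rw [hp1, norm_smul, Real.norm_eq_abs, he1, mul_one, abs_neg] at h1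
        exact h1.symm
      rcases (abs_eq zero_le_one).mp habs with h1 | h1
      · apply hpne; rw [hpxy, h1]; module
      · apply hpe; rw [hpxy, h1]; module
  set q : EuclideanSpace ℝ (Fin n) := ‖a • e + b • p‖⁻¹ • (a • e + b • p) with hq
  have hq1 : ‖q‖ = 1 := myNormInvSmul hab
  -- the path g from q to p
  set g : ℝ → EuclideanSpace ℝ (Fin n) := fun u => (1-u) • q + u • p with hg
  have hgcoef : ∀ u : ℝ, g u = ((1-u) * (‖a • e + b • p‖⁻¹ * a)) • e
      + ((1-u) * (‖a • e + b • p‖⁻¹ * b) + u) • p := by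
    intro u
    rw [hg]
    simp only [hq]
    module
  have hgne : ∀ u : ℝ, g u ≠ 0 := by
    intro u hu
    rw [hgcoef u] at hu
    obtain ⟨h1, h2⟩ := hind _ _ hu
    have hu1 : u = 1 := by
      rcases mul_eq_zero.mp h1 with h3 | h3
      · linarith
      · exfalso
        rcases mul_eq_zero.mp h3 with h4 | h4
        · exact (inv_ne_zero (ne_of_gt hN)) h4
        · linarith
    rw [hu1] at h2
    norm_num at h2
  have hgcont : Continuous g := by
    rw [hg]
    exact ((continuous_const.sub continuous_id).smul continuous_const).add
      (continuous_id.smul continuous_const)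
  set φ : ℝ → EuclideanSpace ℝ (Fin n) := fun u => s • (‖g u‖⁻¹ • g u) with hφ
  have hφcont : Continuous φ := by
    rw [hφ]
    exact Continuous.smul (f := fun _ => s) continuous_const
      (Continuous.smul (f := fun u => ‖g u‖⁻¹) (hgcont.norm.inv₀ (fun u => norm_ne_zero_iff.mpr (hgne u))) hgcont)
  have hg0 : g 0 = q := by simp only [hg]; norm_num
  have hg1 : g 1 = p := by simp only [hg]; norm_num
  have hφ0 : φ 0 = s • q := by
    simp only [hφ]
    rw [hg0, hq1]
    norm_num
  have hφ1 : φ 1 = s • p := by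
    simp only [hφ]
    rw [hg1, hp1]
    norm_num

  by_contra hqΩ
  -- the "bad" set along the path
  set T : Set ℝ := Icc (0:ℝ) 1 ∩ φ ⁻¹' Ωᶜ with hT
  have hT0 : (0:ℝ) ∈ T := ⟨⟨le_refl 0, zero_le_one⟩, by rw [mem_preimage, hφ0]; exact hqΩ⟩
  have hTc : IsClosed T := IsClosed.inter isClosed_Icc (hΩo.isClosed_compl.preimage hφcont)
  have hTbdd : BddAbove T := ⟨1, fun u hu => hu.1.2⟩
  set u₀ : ℝ := sSup T with hu₀
  have hu₀T : u₀ ∈ T := hTc.csSup_mem ⟨0, hT0⟩ hTbdd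
  have hu₀0 : 0 ≤ u₀ := hu₀T.1.1
  have hu₀1 : u₀ < 1 := by
    rcases lt_or_eq_of_le hu₀T.1.2 with h1 | h1
    · exact h1
    · exfalso
      have h2 := hu₀T.2
      rw [mem_preimage, h1, hφ1] at h2
      exact h2 hpΩ
  have hwnΩ : φ u₀ ∉ Ω := hu₀T.2
  have hwcl : φ u₀ ∈ closure Ω := by
    have htend : Filter.Tendsto φ (nhdsWithin u₀ (Ioi u₀)) (nhds (φ u₀)) :=
      (hφcont.tendsto u₀).mono_left nhdsWithin_le_nhds
    apply mem_closure_of_tendsto htend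
    filter_upwards [Ioc_mem_nhdsGT hu₀1] with u hu
    by_contra h1
    have h2 : u ∈ T := ⟨⟨le_trans hu₀0 hu.1.le, hu.2⟩, h1⟩
    exact absurd (le_csSup hTbdd h2) (not_le.mpr hu.1)
  have hwfr : φ u₀ ∈ frontier Ω := by
    rw [hΩo.frontier_eq]
    exact ⟨hwcl, hwnΩ⟩
  have hwnorm : ‖φ u₀‖ = s := by
    simp only [hφ]
    rw [norm_smul, Real.norm_eq_abs, abs_of_pos hs0, myNormInvSmul (hgne u₀), mul_one]
  obtain ⟨ν, hν1, hνs⟩ := myExistsNormal hΩo hΩc ⟨e, heΩ⟩ hwnΩ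
  have hts : s ∈ Icc (t/4) (4*t) := by
    obtain ⟨ht01, -⟩ := ht
    exact ⟨by linarith [hs.1, ht01.1], by linarith [hs.2, ht01.1]⟩
  have hMs := ht.2 s hts
  have hMw : ⟪ν, φ u₀⟫ ≤ Mfun Ω 0 s := by
    apply le_csSup
    · refine ⟨s, ?_⟩
      rintro m ⟨y, ν', hyfr, hy0, hys, ⟨hν'1, -⟩, rfl⟩
      calc ⟪ν', y - 0⟫ ≤ ‖ν'‖ * ‖y - 0‖ := real_inner_le_norm _ _
        _ = ‖y - 0‖ := by rw [hν'1, one_mul]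
        _ ≤ s := hys
    · exact ⟨φ u₀, ν, hwfr, by rw [sub_zero, hwnorm]; exact hs0,
        by rw [sub_zero, hwnorm], ⟨hν1, fun z hz => (hνs z hz).le⟩, by rw [sub_zero]⟩
  obtain ⟨κ, hκ⟩ : ∃ κ, ⟪ν, ‖g u₀‖⁻¹ • g u₀⟫ = κ := ⟨_, rfl⟩
  have hφκ : ⟪ν, φ u₀⟫ = s * κ := by
    simp only [hφ]
    rw [real_inner_smul_right, hκ]
  have hκc : κ ≤ Real.sin (rstar/2) / 8 := by
    rw [hφκ] at hMw
    nlinarith [le_trans hMw hMs, hs0]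
  have hνz : ∀ z ∈ Ω, ⟪ν, z⟫ < s * κ := by
    intro z hz
    have h5 := hνs z hz
    rw [inner_sub_right, hφκ] at h5
    linarith
  have hcapν : ∀ ω : EuclideanSpace ℝ (Fin n), ‖ω‖ = 1 → Real.cos rstar < ⟪ω, e⟫ →
      ⟪ν, ω⟫ ≤ Real.sin (rstar/2) / 8 := by
    intro ω h1 h2
    have h4 := hνz _ (myConeMem hΩo hΩc h0 (hcapΩ ω h1 h2) hs0 hs1.le)
    rw [real_inner_smul_right] at h4
    nlinarith [hκc, hs0]
  have hμ := myInnerENeg he1 hν1 hr0 hr2 hcapν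
  have hμneg : ⟪ν, e⟫ < 0 := by linarith
  have hκ0 : 0 ≤ κ := by
    by_contra hneg
    push_neg at hneg
    obtain ⟨μ', hμ'⟩ : ∃ μ', ⟪ν, e⟫ = μ' := ⟨_, rfl⟩
    rw [hμ'] at hμneg
    have hl0 : 0 < min 1 (s * κ / μ') := by
      apply lt_min one_pos
      apply div_pos_of_neg_of_neg
      · nlinarith
      · exact hμneg
    have h5 := hνz _ (myConeMem hΩo hΩc h0 heΩ hl0 (min_le_left _ _))
    rw [real_inner_smul_right, hμ'] at h5
    have h6 : min 1 (s * κ / μ') ≤ s * κ / μ' := min_le_right _ _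
    have h7 := mul_le_mul_of_nonpos_right h6 (le_of_lt hμneg)
    rw [div_mul_cancel₀ _ (ne_of_lt hμneg)] at h7
    linarith
  have hβ : ⟪ν, p⟫ < κ := by
    have h5 := hνz _ hpΩ
    rw [real_inner_smul_right] at h5
    nlinarith [hs0]
  obtain ⟨A, B, hA, hB, hgu⟩ : ∃ A B : ℝ, 0 < A ∧ 0 ≤ B ∧ g u₀ = A • e + B • p :=
    ⟨(1-u₀) * (‖a • e + b • p‖⁻¹ * a), (1-u₀) * (‖a • e + b • p‖⁻¹ * b) + u₀,
      mul_pos (by linarith) (mul_pos (inv_pos.mpr hN) ha),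
      add_nonneg (mul_nonneg (by linarith) (mul_nonneg (inv_nonneg.mpr hN.le) hb)) hu₀0,
      hgcoef u₀⟩
  have hD : 0 < ‖g u₀‖ := norm_pos_iff.mpr (hgne u₀)
  have hDκ : ‖g u₀‖ * κ = A * ⟪ν, e⟫ + B * ⟪ν, p⟫ := by
    have h5 : ⟪ν, g u₀⟫ = A * ⟪ν, e⟫ + B * ⟪ν, p⟫ := by
      rw [hgu, inner_add_right, real_inner_smul_right, real_inner_smul_right]
    rw [← h5, ← hκ, real_inner_smul_right]
    field_simp
  have hBA : B - A ≤ ‖g u₀‖ := by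
    have h5 : ‖B • p‖ - ‖(-A) • e‖ ≤ ‖B • p - (-A) • e‖ := norm_sub_norm_le _ _
    have h6 : B • p - (-A) • e = A • e + B • p := by module
    rw [h6, ← hgu] at h5
    rw [norm_smul, norm_smul, Real.norm_eq_abs, Real.norm_eq_abs, abs_of_nonneg hB,
      abs_neg, abs_of_pos hA, hp1, he1, mul_one, mul_one] at h5
    linarith
  have f1 : (B - A) * κ ≤ ‖g u₀‖ * κ := mul_le_mul_of_nonneg_right hBA hκ0
  have f2 : B * ⟪ν, p⟫ ≤ B * κ := mul_le_mul_of_nonneg_left hβ.le hB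
  have f3 : A * ⟪ν, e⟫ ≤ A * (-(Real.sin (rstar/2) / 4)) :=
    mul_le_mul_of_nonneg_left hμ hA.le
  have f4 : A * κ ≤ A * (Real.sin (rstar/2) / 8) := mul_le_mul_of_nonneg_left hκc hA.le
  nlinarith [mul_pos hA hS, f1, f2, f3, f4, hDκ]
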